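/- Let P_q be a Paley graph with q ≥ 9, let k ∈ N with k ≤ (√q + 3)/2, let X* be the matrix with diagonal entries 1/√q, zero on edges and 2/(q+√q) on non-edges, and let I be any set of k vertices. Then the principal submatrix X*_I lies in the squared stable set polytope STAB²(P_{q,I}) of the subgraph induced by I; i.e., X*_I is a convex combination of outer products ssᵀ of incidence vectors s of stable sets of the induced subgraph. -/

import Mathlib

open scoped Classical

/-- The Paley graph on a finite field: vertices are field elements, two vertices
adjacent iff their difference is a nonzero square. -/
def Paley (F : Type) [Field F] : SimpleGraph F :=
  SimpleGraph.fromRel (fun x y => ∃ z : F, z ≠ 0 ∧ x - y = z ^ 2)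

/-- The squared stable set polytope STAB²(H): the convex hull of the outer
products ssᵀ of incidence vectors s of stable sets of H. -/
def stab2 {W : Type} (H : SimpleGraph W) : Set (Matrix W W ℝ) :=
  convexHull ℝ {M | ∃ s : W → ℝ, (∀ i, s i = 0 ∨ s i = 1) ∧
    (∀ i j, H.Adj i j → s i * s j = 0) ∧ M = Matrix.vecMulVec s s}

/-- The matrix X* with diagonal 1/√q, zero on edges of the Paley graph and
2/(q+√q) on non-edges. -/
noncomputable def Xstar (F : Type) [Field F] (q : ℕ) : Matrix F F ℝ :=
  Matrix.of fun i j =>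
    if i = j then 1 / Real.sqrt q
    else if (Paley F).Adj i j then 0 else 2 / (q + Real.sqrt q)

open Finset Matrix

section Aux

variable {V : Type} (H : SimpleGraph V)

lemma aux_sdiag (c : ℝ) (i x : V) :
    c * ((if x = i then (1:ℝ) else 0) * (if x = i then (1:ℝ) else 0))
      = if i = x then c else 0 := by
  by_cases h : x = i
  · simp [h]
  · simp [h, Ne.symm h]

lemma aux_soff (c : ℝ) (i x y : V) (hxy : x ≠ y) :
    c * ((if x = i then (1:ℝ) else 0) * (if y = i then (1:ℝ) else 0)) = 0 := by
  by_cases h1 : x = i <;> by_cases h2 : y = i <;> simp [h1, h2]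
  exact absurd (h1.trans h2.symm) hxy

lemma aux_pdiag (b : ℝ) (i j x : V) :
    (if j ≠ i ∧ ¬H.Adj i j then b/2 else 0) *
      ((if (j ≠ i ∧ ¬H.Adj i j) ∧ (x = i ∨ x = j) then (1:ℝ) else 0) *
       (if (j ≠ i ∧ ¬H.Adj i j) ∧ (x = i ∨ x = j) then (1:ℝ) else 0))
    = (if i = x ∧ (j ≠ x ∧ ¬ H.Adj x j) then b/2 else 0)
      + (if j = x ∧ (i ≠ x ∧ ¬ H.Adj x i) then b/2 else 0) := by
  by_cases hix : i = x <;> by_cases hjx : j = x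
  · simp [hix, hjx]
  · by_cases hadj : H.Adj x j <;> simp [hix, hjx, hadj, Ne.symm hjx]
  · have hcomm := H.adj_comm i x
    by_cases hadj : H.Adj x i <;>
      simp [hix, hjx, hadj, Ne.symm hix, hcomm]
  · simp [hix, hjx, Ne.symm hix, Ne.symm hjx]

lemma aux_poff (b : ℝ) (i j x y : V) (hxy : x ≠ y) :
    (if j ≠ i ∧ ¬H.Adj i j then b/2 else 0) *
      ((if (j ≠ i ∧ ¬H.Adj i j) ∧ (x = i ∨ x = j) then (1:ℝ) else 0) *
       (if (j ≠ i ∧ ¬H.Adj i j) ∧ (y = i ∨ y = j) then (1:ℝ) else 0))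
    = (if (i, j) = (x, y) then (if ¬ H.Adj x y then b/2 else 0) else 0)
      + (if (i, j) = (y, x) then (if ¬ H.Adj x y then b/2 else 0) else 0) := by
  by_cases hC : j ≠ i ∧ ¬H.Adj i j
  · obtain ⟨hji, hnadj⟩ := hC
    have hcomm := H.adj_comm i j
    by_cases hix : i = x <;> by_cases hiy : i = y <;>
      by_cases hjx : j = x <;> by_cases hjy : j = y <;>
      simp_all [Prod.ext_iff] <;>
      tauto
  · rw [if_neg hC, zero_mul]
    have e1 : (if (i, j) = (x, y) then (if ¬ H.Adj x y then b/2 else 0) else 0) = 0 := by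
      by_cases h1 : (i, j) = (x, y)
      · have hix : i = x := congrArg Prod.fst h1
        have hjy : j = y := congrArg Prod.snd h1
        have hA : H.Adj x y := by
          by_contra hA
          apply hC
          constructor
          · rw [hjy, hix]; exact Ne.symm hxy
          · rw [hix, hjy]; exact hA
        simp [h1, hA]
      · simp [h1]
    have e2 : (if (i, j) = (y, x) then (if ¬ H.Adj x y then b/2 else 0) else 0) = 0 := by
      by_cases h1 : (i, j) = (y, x)
      · have hiy : i = y := congrArg Prod.fst h1
        have hjx : j = x := congrArg Prod.snd h1
        have hA : H.Adj x y := by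
          by_contra hA
          apply hC
          constructor
          · rw [hjx, hiy]; exact hxy
          · rw [hiy, hjx]; exact fun h => hA (H.adj_symm h)
        simp [h1, hA]
      · simp [h1]
    rw [e1, e2]; ring

end Aux

set_option maxHeartbeats 1000000 in
lemma stab2_aux {V : Type} [Fintype V] (H : SimpleGraph V) (a b : ℝ)
    (hb : 0 ≤ b)
    (hd : ∀ i : V, b * ((univ.filter (fun j => j ≠ i ∧ ¬ H.Adj i j)).card : ℝ) ≤ a)
    (hsum : ∑ i : V, (a - b/2 * ((univ.filter (fun j => j ≠ i ∧ ¬ H.Adj i j)).card : ℝ)) ≤ 1)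
    (M : Matrix V V ℝ)
    (hM : ∀ i j, M i j = if i = j then a else if H.Adj i j then 0 else b) :
    M ∈ stab2 H := by
  classical
  set d : V → ℝ := fun i => ((univ.filter (fun j => j ≠ i ∧ ¬ H.Adj i j)).card : ℝ) with hdd
  set sv : Unit ⊕ V ⊕ V × V → V → ℝ := fun t =>
    match t with
    | .inl _ => fun _ => 0
    | .inr (.inl i) => fun x => if x = i then 1 else 0
    | .inr (.inr (i, j)) => fun x => if (j ≠ i ∧ ¬ H.Adj i j) ∧ (x = i ∨ x = j) then 1 else 0
    with hsv
  set w : Unit ⊕ V ⊕ V × V → ℝ := fun t =>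
    match t with
    | .inl _ => 1 - ∑ i : V, (a - b/2 * d i)
    | .inr (.inl i) => a - b * d i
    | .inr (.inr (i, j)) => if j ≠ i ∧ ¬ H.Adj i j then b/2 else 0
    with hw
  set z : Unit ⊕ V ⊕ V × V → Matrix V V ℝ := fun t => Matrix.vecMulVec (sv t) (sv t) with hz
  have hsv01 : ∀ t x, sv t x = 0 ∨ sv t x = 1 := by
    intro t x
    rcases t with _ | i | ⟨i, j⟩
    · simp [hsv]
    · simp only [hsv]; split_ifs <;> simp
    · simp only [hsv]; split_ifs <;> simp
  have hstab : ∀ t x y, H.Adj x y → sv t x * sv t y = 0 := by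
    intro t x y hxy
    rcases t with _ | i | ⟨i, j⟩
    · simp [hsv]
    · simp only [hsv]
      split_ifs with h1 h2
      · subst h1; subst h2; exact absurd hxy (H.irrefl)
      all_goals ring
    · simp only [hsv]
      split_ifs with h1 h2
      · obtain ⟨⟨hij, hnadj⟩, hx⟩ := h1
        obtain ⟨_, hy⟩ := h2
        have hne : x ≠ y := H.ne_of_adj hxy
        rcases hx with rfl | rfl <;> rcases hy with rfl | rfl
        · exact absurd rfl hne
        · exact absurd hxy hnadj
        · exact absurd hxy (fun h => hnadj (H.adj_symm h))
        · exact absurd rfl hne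
      all_goals ring
  have hmem : ∀ t, z t ∈ {M : Matrix V V ℝ | ∃ s : V → ℝ, (∀ i, s i = 0 ∨ s i = 1) ∧
      (∀ i j, H.Adj i j → s i * s j = 0) ∧ M = Matrix.vecMulVec s s} := by
    intro t
    exact ⟨sv t, hsv01 t, hstab t, rfl⟩
  have hd0 : ∀ i, (0:ℝ) ≤ d i := fun i => Nat.cast_nonneg _
  have hw0 : ∀ t, 0 ≤ w t := by
    intro t
    rcases t with _ | i | ⟨i, j⟩
    · simp only [hw]; linarith [hsum]
    · simp only [hw]; linarith [hd i]
    · simp only [hw]; split_ifs <;> linarith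
  have hpairsum : ∀ i : V, ∑ j : V, (if j ≠ i ∧ ¬ H.Adj i j then b/2 else 0) = b/2 * d i := by
    intro i
    rw [← Finset.sum_filter, Finset.sum_const, nsmul_eq_mul, hdd]
    ring
  have hw1 : ∑ t, w t = 1 := by
    rw [Fintype.sum_sum_type, Fintype.sum_sum_type, Fintype.sum_prod_type]
    simp only [hw, Fintype.sum_unique]
    rw [Finset.sum_congr rfl (fun i _ => hpairsum i)]
    rw [← Finset.sum_add_distrib]
    have e : ∑ i : V, (a - b * d i + b/2 * d i) = ∑ i : V, (a - b/2 * d i) := by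
      apply Finset.sum_congr rfl; intro i _; ring
    rw [e]; ring
  have hMsum : M = ∑ t, w t • z t := by
    ext x y
    rw [Matrix.sum_apply]
    simp only [Matrix.smul_apply, hz, Matrix.vecMulVec_apply, smul_eq_mul]
    rw [Fintype.sum_sum_type, Fintype.sum_sum_type, Fintype.sum_prod_type]
    have h0 : ∑ u : Unit, w (.inl u) * (sv (.inl u) x * sv (.inl u) y) = 0 := by
      simp [hsv]
    by_cases hxy : x = y
    · rw [← hxy]
      have h1 : ∑ i : V, w (.inr (.inl i)) * (sv (.inr (.inl i)) x * sv (.inr (.inl i)) x)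
          = a - b * d x := by
        have e : ∀ i : V, w (.inr (.inl i)) * (sv (.inr (.inl i)) x * sv (.inr (.inl i)) x)
            = if i = x then a - b * d i else 0 := by
          intro i
          simp only [hw, hsv]
          exact aux_sdiag (a - b * d i) i x
        rw [Finset.sum_congr rfl (fun i _ => e i)]
        rw [Finset.sum_ite_eq' univ x (fun i => a - b * d i)]
        simp
      have h3 : ∑ i : V, ∑ j : V, (w (.inr (.inr (i, j))) *
          (sv (.inr (.inr (i, j))) x * sv (.inr (.inr (i, j))) x)) = b * d x := by
        have e : ∀ i j : V, w (.inr (.inr (i, j))) *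
            (sv (.inr (.inr (i, j))) x * sv (.inr (.inr (i, j))) x)
            = (if i = x ∧ (j ≠ x ∧ ¬ H.Adj x j) then b/2 else 0)
              + (if j = x ∧ (i ≠ x ∧ ¬ H.Adj x i) then b/2 else 0) := by
          intro i j
          simp only [hw, hsv]
          exact aux_pdiag H b i j x
        rw [Finset.sum_congr rfl (fun i _ => Finset.sum_congr rfl (fun j _ => e i j))]
        rw [Finset.sum_congr rfl (fun i (_ : i ∈ univ) => Finset.sum_add_distrib)]
        rw [Finset.sum_add_distrib]
        have e2 : ∑ i : V, ∑ j : V, (if i = x ∧ (j ≠ x ∧ ¬ H.Adj x j) then b/2 else 0)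
            = b/2 * d x := by
          have step : ∀ i : V, ∑ j : V, (if i = x ∧ (j ≠ x ∧ ¬ H.Adj x j) then b/2 else 0)
              = if i = x then b/2 * d x else 0 := by
            intro i
            by_cases hix : i = x
            · rw [if_pos hix]
              have e' : ∀ j : V, (if i = x ∧ (j ≠ x ∧ ¬ H.Adj x j) then b/2 else 0)
                  = (if j ≠ x ∧ ¬ H.Adj x j then b/2 else 0) := fun j => by
                rw [if_congr (and_iff_right hix) rfl rfl]
              rw [Finset.sum_congr rfl (fun j _ => e' j)]
              exact hpairsum x
            · simp [hix]
          rw [Finset.sum_congr rfl (fun i _ => step i)]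
          rw [Finset.sum_ite_eq' univ x (fun _ => b/2 * d x)]
          simp
        have e3 : ∑ i : V, ∑ j : V, (if j = x ∧ (i ≠ x ∧ ¬ H.Adj x i) then b/2 else 0)
            = b/2 * d x := by
          have step : ∀ i : V, ∑ j : V, (if j = x ∧ (i ≠ x ∧ ¬ H.Adj x i) then b/2 else 0)
              = if i ≠ x ∧ ¬ H.Adj x i then b/2 else 0 := by
            intro i
            by_cases hR : i ≠ x ∧ ¬ H.Adj x i
            · have e' : ∀ j : V, (if j = x ∧ (i ≠ x ∧ ¬ H.Adj x i) then b/2 else 0)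
                  = (if j = x then b/2 else 0) := fun j => by
                rw [if_congr (and_iff_left hR) rfl rfl]
              rw [Finset.sum_congr rfl (fun j _ => e' j),
                Finset.sum_ite_eq' univ x (fun _ => b/2), if_pos (Finset.mem_univ x), if_pos hR]
            · simp [hR]
          rw [Finset.sum_congr rfl (fun i _ => step i)]
          rw [← Finset.sum_filter, Finset.sum_const, nsmul_eq_mul, hdd]
          ring
        rw [e2, e3]; ring
      rw [h0, h1, h3, hM x x]
      simp
    · have h1 : ∑ i : V, w (.inr (.inl i)) * (sv (.inr (.inl i)) x * sv (.inr (.inl i)) y)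
          = 0 := by
        apply Finset.sum_eq_zero
        intro i _
        simp only [hw, hsv]
        exact aux_soff (a - b * d i) i x y hxy
      have h3 : ∑ i : V, ∑ j : V, (w (.inr (.inr (i, j))) *
          (sv (.inr (.inr (i, j))) x * sv (.inr (.inr (i, j))) y))
          = if ¬ H.Adj x y then b else 0 := by
        have e : ∀ i j : V, w (.inr (.inr (i, j))) *
            (sv (.inr (.inr (i, j))) x * sv (.inr (.inr (i, j))) y)
            = (if (i, j) = (x, y) then (if ¬ H.Adj x y then b/2 else 0) else 0)
              + (if (i, j) = (y, x) then (if ¬ H.Adj x y then b/2 else 0) else 0) := by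
          intro i j
          simp only [hw, hsv]
          exact aux_poff H b i j x y hxy
        rw [Finset.sum_congr rfl (fun i _ => Finset.sum_congr rfl (fun j _ => e i j))]
        have c1 : ∀ i : V, ∑ j : V, ((if (i, j) = (x, y) then (if ¬ H.Adj x y then b/2 else 0) else 0)
              + (if (i, j) = (y, x) then (if ¬ H.Adj x y then b/2 else 0) else 0))
            = (if i = x then (if ¬ H.Adj x y then b/2 else 0) else 0)
              + (if i = y then (if ¬ H.Adj x y then b/2 else 0) else 0) := by
          intro i
          rw [Finset.sum_add_distrib]
          congr 1
          · by_cases hix : i = x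
            · simp [Prod.ext_iff, hix]
            · simp [Prod.ext_iff, hix]
          · by_cases hiy : i = y
            · simp [Prod.ext_iff, hiy]
            · simp [Prod.ext_iff, hiy]
        rw [Finset.sum_congr rfl (fun i _ => c1 i), Finset.sum_add_distrib]
        rw [Finset.sum_ite_eq' univ x (fun _ => if ¬ H.Adj x y then b/2 else 0)]
        rw [Finset.sum_ite_eq' univ y (fun _ => if ¬ H.Adj x y then b/2 else 0)]
        simp only [Finset.mem_univ, if_true]
        split_ifs <;> ring
      rw [h0, h1, h3, hM x y]
      simp only [hxy, if_false]
      split_ifs with h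
      · simp [h]
      · simp [h]
  have hcm := Finset.centerMass_mem_convexHull (univ : Finset (Unit ⊕ V ⊕ V × V))
    (fun t _ => hw0 t) (by rw [hw1]; norm_num) (fun t _ => hmem t)
  rw [Finset.centerMass, hw1, inv_one, one_smul] at hcm
  rw [stab2, hMsum]
  exact hcm


set_option maxHeartbeats 1000000 in
theorem stmt11 (q : ℕ) (F : Type) [Field F] [Fintype F]
    (hcard : Fintype.card F = q) (hq : q % 4 = 1) (hq9 : 9 ≤ q)
    (k : ℕ) (hk : (k : ℝ) ≤ (Real.sqrt q + 3) / 2)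
    (I : Finset F) (hI : I.card = k) :
    (Xstar F q).submatrix (fun a : (I : Set F) => (a : F)) (fun a : (I : Set F) => (a : F)) ∈
      stab2 ((Paley F).induce (I : Set F)) := by
  classical
  set r : ℝ := Real.sqrt q with hr
  have hq9' : (9:ℝ) ≤ (q:ℝ) := by exact_mod_cast hq9
  have hr3 : (3:ℝ) ≤ r := by
    rw [hr, show (3:ℝ) = Real.sqrt 9 by
      rw [show (9:ℝ) = 3^2 by norm_num, Real.sqrt_sq (by norm_num)]]
    exact Real.sqrt_le_sqrt hq9'
  have hrpos : (0:ℝ) < r := by linarith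
  have hrsq : r ^ 2 = (q:ℝ) := Real.sq_sqrt (by positivity)
  have hqrpos : (0:ℝ) < (q:ℝ) + r := by nlinarith
  set H := (Paley F).induce (I : Set F) with hH
  have hkV : Fintype.card ((I : Set F)) = k := by
    rw [← hI]
    simp
  -- degree bound
  have hdreal : ∀ (i : ((I : Set F))) (s : Finset ((I : Set F))), (∀ j ∈ s, j ≠ i) →
      (s.card : ℝ) ≤ (k:ℝ) - 1 := by
    intro i s hs
    have h1 : s ⊆ Finset.univ.erase i := fun j hj =>
      Finset.mem_erase.mpr ⟨hs j hj, Finset.mem_univ j⟩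
    have h2 : s.card ≤ k - 1 := by
      calc s.card ≤ (Finset.univ.erase i).card := Finset.card_le_card h1
        _ = Fintype.card ((I : Set F)) - 1 := by
            rw [Finset.card_erase_of_mem (Finset.mem_univ i), Finset.card_univ]
        _ = k - 1 := by rw [hkV]
    have h3 : 1 ≤ k := by
      rw [← hkV]
      exact Fintype.card_pos_iff.mpr ⟨i⟩
    have h4 : (s.card : ℝ) ≤ ((k - 1 : ℕ) : ℝ) := by exact_mod_cast h2
    rwa [Nat.cast_sub h3, Nat.cast_one] at h4
  apply stab2_aux H (1/r) (2/((q:ℝ)+r))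
  · positivity
  · intro i
    have h2 : 2/((q:ℝ)+r) * ((k:ℝ)-1) ≤ 1/r := by
      rw [div_mul_eq_mul_div, div_le_div_iff₀ hqrpos hrpos]
      nlinarith [mul_le_mul_of_nonneg_right hk hrpos.le, hrsq, hr3, hrpos]
    exact le_trans (mul_le_mul_of_nonneg_left
      (hdreal i _ (fun j hj => by
        simp only [Finset.mem_filter] at hj
        exact hj.2.1)) (by positivity)) h2
  · refine le_trans (Finset.sum_le_sum (g := fun _ => 1/r) (fun i _ => ?_)) ?_
    · exact sub_le_self _ (by positivity)
    · rw [Finset.sum_const, Finset.card_univ, hkV, nsmul_eq_mul, mul_one_div,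
        div_le_one hrpos]
      linarith [hr3, hk]
  · intro i j
    simp only [Matrix.submatrix_apply, Xstar, Matrix.of_apply]
    by_cases hij : i = j
    · simp [hij, hr]
    · have hij' : (i : F) ≠ (j : F) := fun h => hij (Subtype.ext h)
      have hadj : H.Adj i j ↔ (Paley F).Adj (i : F) (j : F) := Iff.rfl
      rw [if_neg hij', if_neg hij]
      by_cases hA : (Paley F).Adj (i : F) (j : F)
      · rw [if_pos hA, if_pos (hadj.mpr hA)]
      · rw [if_neg hA, if_neg (fun h => hA (hadj.mp h))]
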